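/- Fix a ∈ (0,1] and a sequence α_1, α_2, ... with α_n ∈ [a,1] for all n. Let the nested designs X_n be generated by the relaxed greedy-packing algorithm: x_1 ∈ X is arbitrary and for each n ≥ 1, x_{n+1} is any point of X with min_{x_i∈X_n} ‖x_{n+1} − x_i‖ ≥ α_n·CR(X_n). Then for all n ≥ 2: CR(X_n) ≤ (2/a)·CR*_n, SR(X_n) ≥ (a/2)·SR*_n, and MR(X_n) ≤ 2/a. -/
import Mathlib


open Metric Set MeasureTheory

/-- Distance from a point `x` to the nearest point of the design `D`. -/
noncomputable def minDist {E : Type*} [NormedAddCommGroup E] (D : Finset E) (x : E) : ℝ :=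
  sInf ((fun p => dist x p) '' (D : Set E))

/-- Fill distance (covering radius) of the design `D` for the set `A`:
`CR_A(D) = sup_{x ∈ A} min_{p ∈ D} ‖x - p‖`. -/
noncomputable def fillDist {E : Type*} [NormedAddCommGroup E] (A : Set E) (D : Finset E) : ℝ :=
  sSup ((fun x => minDist D x) '' A)

/-- Separation radius of the design `D`:
`SR(D) = (1/2) min_{p ≠ q ∈ D} ‖p - q‖`. -/
noncomputable def sepRad {E : Type*} [NormedAddCommGroup E] (D : Finset E) : ℝ :=
  (1 / 2) * sInf ((fun p : E × E => dist p.1 p.2) '' {p | p.1 ∈ D ∧ p.2 ∈ D ∧ p.1 ≠ p.2})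

/-- Mesh-ratio of the design `D` for the set `A`: `MR(D) = CR_A(D) / SR(D)`. -/
noncomputable def meshRatio {E : Type*} [NormedAddCommGroup E] (A : Set E) (D : Finset E) : ℝ :=
  fillDist A D / sepRad D

/-- The nested design consisting of the first `n` points of the sequence `x`. -/
noncomputable def design {E : Type*} (x : ℕ → E) (n : ℕ) : Finset E :=
  letI := Classical.decEq E
  (Finset.range n).image x

section helpers

variable {E : Type*} [NormedAddCommGroup E]

lemma minDist_nonneg (D : Finset E) (y : E) : 0 ≤ minDist D y :=
  Real.sInf_nonneg (by rintro r ⟨p, -, rfl⟩; exact dist_nonneg)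

lemma bddBelow_dists (D : Finset E) (y : E) :
    BddBelow ((fun p => dist y p) '' (D : Set E)) :=
  ⟨0, by rintro r ⟨p, -, rfl⟩; exact dist_nonneg⟩

lemma minDist_le {D : Finset E} {p : E} (hp : p ∈ D) (y : E) : minDist D y ≤ dist y p :=
  csInf_le (bddBelow_dists D y) ⟨p, hp, rfl⟩

lemma exists_minDist_eq {D : Finset E} (hD : D.Nonempty) (y : E) :
    ∃ p ∈ D, minDist D y = dist y p := by
  have hfin : ((fun p => dist y p) '' (D : Set E)).Finite := D.finite_toSet.image _
  have hne : ((fun p => dist y p) '' (D : Set E)).Nonempty :=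
    ⟨_, ⟨hD.choose, hD.choose_spec, rfl⟩⟩
  obtain ⟨p, hp, h⟩ := hne.csInf_mem hfin
  exact ⟨p, hp, h.symm⟩

lemma minDist_anti {D D' : Finset E} (hD : D.Nonempty) (h : D ⊆ D') (y : E) :
    minDist D' y ≤ minDist D y := by
  obtain ⟨p, hp, hEq⟩ := exists_minDist_eq hD y
  rw [hEq]
  exact minDist_le (h hp) y

lemma bddAbove_minDist {S : Set E} (hS : IsCompact S) {D : Finset E} {p0 : E}
    (hp0 : p0 ∈ D) (hp0S : p0 ∈ S) : BddAbove ((fun y => minDist D y) '' S) := by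
  refine ⟨Metric.diam S, ?_⟩
  rintro r ⟨y, hy, rfl⟩
  exact (minDist_le hp0 y).trans (Metric.dist_le_diam_of_mem hS.isBounded hy hp0S)

lemma le_fillDist {S : Set E} (hS : IsCompact S) {D : Finset E} {p0 : E} (hp0 : p0 ∈ D)
    (hp0S : p0 ∈ S) {y : E} (hy : y ∈ S) : minDist D y ≤ fillDist S D :=
  le_csSup (bddAbove_minDist hS hp0 hp0S) ⟨y, hy, rfl⟩

lemma fillDist_nonneg {S : Set E} (hS : IsCompact S) {D : Finset E} {p0 : E} (hp0 : p0 ∈ D)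
    (hp0S : p0 ∈ S) : 0 ≤ fillDist S D :=
  (minDist_nonneg D p0).trans (le_fillDist hS hp0 hp0S hp0S)

lemma fillDist_le {S : Set E} (hS : S.Nonempty) {D : Finset E} {c : ℝ}
    (h : ∀ y ∈ S, minDist D y ≤ c) : fillDist S D ≤ c :=
  csSup_le (hS.image _) (by rintro r ⟨y, hy, rfl⟩; exact h y hy)

lemma two_sepRad_le {D : Finset E} {p q : E} (hp : p ∈ D) (hq : q ∈ D) (hne : p ≠ q) :
    2 * sepRad D ≤ dist p q := by
  have h : sInf ((fun p : E × E => dist p.1 p.2) '' {p | p.1 ∈ D ∧ p.2 ∈ D ∧ p.1 ≠ p.2})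
      ≤ dist p q :=
    csInf_le ⟨0, by rintro r ⟨⟨u, v⟩, -, rfl⟩; exact dist_nonneg⟩ ⟨(p, q), ⟨hp, hq, hne⟩, rfl⟩
  rw [sepRad] at *
  linarith

lemma le_two_sepRad {D : Finset E} {c : ℝ} (hD : ∃ p ∈ D, ∃ q ∈ D, p ≠ q)
    (h : ∀ p ∈ D, ∀ q ∈ D, p ≠ q → c ≤ dist p q) : c ≤ 2 * sepRad D := by
  obtain ⟨p, hp, q, hq, hne⟩ := hD
  have h2 : c ≤ sInf ((fun p : E × E => dist p.1 p.2) '' {p | p.1 ∈ D ∧ p.2 ∈ D ∧ p.1 ≠ p.2}) := by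
    have hne0 : ((fun p : E × E => dist p.1 p.2) ''
        {p | p.1 ∈ D ∧ p.2 ∈ D ∧ p.1 ≠ p.2}).Nonempty :=
      ⟨_, ⟨(p, q), ⟨hp, hq, hne⟩, rfl⟩⟩
    apply le_csInf hne0
    rintro r ⟨⟨u, v⟩, ⟨hu, hv, huv⟩, rfl⟩
    exact h u hu v hv huv
  rw [sepRad]; linarith

lemma sepRad_pos {D : Finset E} (hD : ∃ p ∈ D, ∃ q ∈ D, p ≠ q) : 0 < sepRad D := by
  obtain ⟨p, hp, q, hq, hne⟩ := hD
  have hfin : ((fun p : E × E => dist p.1 p.2) '' {p | p.1 ∈ D ∧ p.2 ∈ D ∧ p.1 ≠ p.2}).Finite := by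
    apply Set.Finite.image
    exact (D.finite_toSet.prod D.finite_toSet).subset (fun z hz => ⟨hz.1, hz.2.1⟩)
  have hne' : ((fun p : E × E => dist p.1 p.2) '' {p | p.1 ∈ D ∧ p.2 ∈ D ∧ p.1 ≠ p.2}).Nonempty :=
    ⟨_, ⟨(p, q), ⟨hp, hq, hne⟩, rfl⟩⟩
  obtain ⟨⟨u, v⟩, ⟨-, -, huv⟩, h⟩ := hne'.csInf_mem hfin
  have : (0 : ℝ) < dist u v := dist_pos.mpr huv
  rw [sepRad, ← h]
  linarith

lemma pigeon {T D : Finset E} (hD : D.Nonempty) (hc : D.card < T.card) {r : ℝ}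
    (cover : ∀ y ∈ T, ∃ p ∈ D, dist y p ≤ r) :
    ∃ u ∈ T, ∃ v ∈ T, u ≠ v ∧ dist u v ≤ 2 * r := by
  classical
  have cover' : ∀ y : E, ∃ p, p ∈ D ∧ (y ∈ T → dist y p ≤ r) := by
    intro y
    by_cases h : y ∈ T
    · obtain ⟨p, hp, hd⟩ := cover y h; exact ⟨p, hp, fun _ => hd⟩
    · exact ⟨hD.choose, hD.choose_spec, fun h' => absurd h' h⟩
  choose f hf1 hf2 using cover'
  obtain ⟨u, hu, v, hv, huv, hfe⟩ :=
    Finset.exists_ne_map_eq_of_card_lt_of_maps_to hc (fun y _ => hf1 y)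
  refine ⟨u, hu, v, hv, huv, ?_⟩
  calc dist u v ≤ dist u (f u) + dist (f u) v := dist_triangle _ _ _
    _ = dist u (f u) + dist v (f v) := by rw [hfe, dist_comm (f v) v]
    _ ≤ r + r := add_le_add (hf2 u hu) (hf2 v hv)
    _ = 2 * r := by ring

end helpers

/-- Fix `a ∈ (0,1]` and `αₖ ∈ [a,1]`. If the nested designs `Xₙ` are
generated by the relaxed greedy-packing algorithm (the `(k+1)`-th point `x k` lies in `S` and
satisfies `min_{x_i ∈ X_k} ‖x_{k+1} − x_i‖ ≥ αₖ·CR(X_k)`), then for all `n ≥ 2`: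
`CR(Xₙ) ≤ (2/a)·CR*ₙ`, `SR(Xₙ) ≥ (a/2)·SR*ₙ` and `MR(Xₙ) ≤ 2/a` (the optimal values being
expressed by quantification over all `n`-point designs `D'` in `S`). -/
theorem statement10 {d : ℕ} (hd : 1 ≤ d)
    {E : Type*} [NormedAddCommGroup E] [NormedSpace ℝ E] [FiniteDimensional ℝ E]
    (hdim : Module.finrank ℝ E = d)
    (S : Set E) (hS : IsCompact S)
    (a : ℝ) (ha : a ∈ Set.Ioc (0 : ℝ) 1) (α : ℕ → ℝ) (hα : ∀ k, α k ∈ Set.Icc a 1)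
    (x : ℕ → E) (hinj : Function.Injective x) (hx0 : x 0 ∈ S)
    (hrelax : ∀ k : ℕ, 1 ≤ k →
      x k ∈ S ∧ α k * fillDist S (design x k) ≤ minDist (design x k) (x k))
    (n : ℕ) (hn : 2 ≤ n) :
    (∀ D' : Finset E, ↑D' ⊆ S → D'.card = n →
        fillDist S (design x n) ≤ (2 / a) * fillDist S D') ∧
    (∀ D' : Finset E, ↑D' ⊆ S → D'.card = n →
        (a / 2) * sepRad D' ≤ sepRad (design x n)) ∧
    meshRatio S (design x n) ≤ 2 / a := by

  classical
  obtain ⟨ha0, ha1⟩ := ha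
  obtain ⟨m, rfl⟩ : ∃ m, n = m + 1 := ⟨n - 1, by omega⟩
  have hm : 1 ≤ m := by omega
  have hxS : ∀ k, x k ∈ S := by
    intro k
    cases k with
    | zero => exact hx0
    | succ k => exact (hrelax (k + 1) (by omega)).1
  have hmem : ∀ i k, i < k → x i ∈ design x k := by
    intro i k hik
    simp only [design, Finset.mem_image, Finset.mem_range]
    exact ⟨i, hik, rfl⟩
  have hmem' : ∀ p k, p ∈ design x k → ∃ i < k, x i = p := by
    intro p k hp
    simpa only [design, Finset.mem_image, Finset.mem_range] using hp
  have hdesignS : ∀ k, ↑(design x k) ⊆ S := by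
    intro k p hp
    obtain ⟨i, -, rfl⟩ := hmem' p k hp
    exact hxS i
  have hcard : ∀ k, (design x k).card = k := by
    intro k
    simp only [design]
    rw [Finset.card_image_of_injective _ hinj, Finset.card_range]
  have hne : ∀ k, 1 ≤ k → (design x k).Nonempty := fun k hk => ⟨x 0, hmem 0 k hk⟩
  have hSne : S.Nonempty := ⟨x 0, hx0⟩
  have hx01 : x 0 ≠ x 1 := fun h => by simpa using hinj h
  have hF0 : ∀ k, 1 ≤ k → 0 ≤ fillDist S (design x k) :=
    fun k hk => fillDist_nonneg hS (hmem 0 k hk) hx0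
  have hFanti : ∀ k l, 1 ≤ k → k ≤ l →
      fillDist S (design x l) ≤ fillDist S (design x k) := by
    intro k l hk hkl
    apply fillDist_le hSne
    intro y hy
    have hsub : design x k ⊆ design x l := by
      intro p hp
      obtain ⟨i, hi, rfl⟩ := hmem' p k hp
      exact hmem i l (by omega)
    exact (minDist_anti (hne k hk) hsub y).trans (le_fillDist hS (hmem 0 k hk) hx0 hy)
  have hsep : ∀ i j, i < j → a * fillDist S (design x j) ≤ dist (x j) (x i) := by
    intro i j hij
    have h1 := (hrelax j (by omega)).2
    have h2 := minDist_le (hmem i j hij) (x j)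
    have h3 : a * fillDist S (design x j) ≤ α j * fillDist S (design x j) :=
      mul_le_mul_of_nonneg_right (hα j).1 (hF0 j (by omega))
    linarith
  have hsep' : ∀ l, 1 ≤ l → ∀ p ∈ design x (l + 1), ∀ q ∈ design x (l + 1), p ≠ q →
      a * fillDist S (design x l) ≤ dist p q := by
    intro l hl p hp q hq hpq
    obtain ⟨i, hi, rfl⟩ := hmem' p _ hp
    obtain ⟨j, hj, rfl⟩ := hmem' q _ hq
    have hij : i ≠ j := fun h => hpq (by rw [h])
    have key : ∀ i' j', i' < j' → j' ≤ l → a * fillDist S (design x l) ≤ dist (x j') (x i') := by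
      intro i' j' h1 h2
      calc a * fillDist S (design x l) ≤ a * fillDist S (design x j') :=
            mul_le_mul_of_nonneg_left (hFanti j' l (by omega) h2) ha0.le
        _ ≤ dist (x j') (x i') := hsep i' j' h1
    rcases lt_or_gt_of_ne hij with h | h
    · rw [dist_comm]; exact key i j h (by omega)
    · exact key j i h (by omega)
  have hsepX : ∀ l, 1 ≤ l → a * fillDist S (design x l) ≤ 2 * sepRad (design x (l + 1)) := by
    intro l hl
    exact le_two_sepRad ⟨x 0, hmem 0 _ (by omega), x 1, hmem 1 _ (by omega), hx01⟩ (hsep' l hl)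
  have hcover : ∀ D : Finset E, D.Nonempty → ↑D ⊆ S →
      ∀ y ∈ S, ∃ p ∈ D, dist y p ≤ fillDist S D := by
    intro D hDne hDS y hy
    obtain ⟨p, hp, hEq⟩ := exists_minDist_eq hDne y
    exact ⟨p, hp, hEq ▸ le_fillDist hS hp (hDS hp) hy⟩
  refine ⟨?_, ?_, ?_⟩
  · -- CR bound
    intro D' hD'S hD'card
    have hD'ne : D'.Nonempty := Finset.card_pos.mp (by omega)
    have hc : D'.card < (design x (m + 2)).card := by rw [hD'card, hcard]; omega
    obtain ⟨u, hu, v, hv, huv, hle⟩ := pigeon hD'ne hc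
      (fun y hy => hcover D' hD'ne hD'S y (hdesignS _ hy))
    have h1 : a * fillDist S (design x (m + 1)) ≤ dist u v :=
      hsep' (m + 1) (by omega) u hu v hv huv
    rw [div_mul_eq_mul_div, le_div_iff₀ ha0, mul_comm]
    linarith
  · -- SR bound
    intro D' hD'S hD'card
    have hc : (design x m).card < D'.card := by rw [hD'card, hcard]; omega
    obtain ⟨u, hu, v, hv, huv, hle⟩ := pigeon (hne m hm) hc
      (fun y hy => hcover (design x m) (hne m hm) (hdesignS m) y (hD'S hy))
    have h1 : 2 * sepRad D' ≤ dist u v := two_sepRad_le hu hv huv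
    have h2 := hsepX m hm
    have h3 : sepRad D' ≤ fillDist S (design x m) := by linarith
    have h4 : a * sepRad D' ≤ a * fillDist S (design x m) :=
      mul_le_mul_of_nonneg_left h3 ha0.le
    linarith
  · -- mesh ratio
    have hpos : 0 < sepRad (design x (m + 1)) :=
      sepRad_pos ⟨x 0, hmem 0 _ (by omega), x 1, hmem 1 _ (by omega), hx01⟩
    have h2 := hsepX m hm
    have h3 : a * fillDist S (design x (m + 1)) ≤ a * fillDist S (design x m) :=
      mul_le_mul_of_nonneg_left (hFanti m (m + 1) hm (by omega)) ha0.le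
    show fillDist S (design x (m + 1)) / sepRad (design x (m + 1)) ≤ 2 / a
    rw [div_le_div_iff₀ hpos ha0]
    linarith
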